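/- If the relation ≺° generated by the rules (O),(A),(TB),(FB),(T) is irreflexive, then every canonical order ≺ for G is an A-Stick order of G. -/
import Mathlib


open Sum

/-- The relation `≺°` generated by the rules (O), (A), (TB), (FB), (T). -/
inductive Prec (n : ℕ) (β : Type) (E : Fin n → β → Prop) (k : β → Fin n) :
    (Fin n ⊕ β) → (Fin n ⊕ β) → Prop
  | O : ∀ {i j : Fin n}, i < j → Prec n β E k (inl i) (inl j)
  | A : ∀ {t : Fin n} {j : β}, E t j → Prec n β E k (inl t) (inr j)
  | TB : ∀ {s t : Fin n} {h j : β}, s < t → t < k j → E s j → ¬ E t j → E t h →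
      Prec n β E k (inr h) (inr j)
  | FB : ∀ {t : Fin n} {w h j : β}, Prec n β E k (inr w) (inr j) → k j < t → E t w →
      E t h → Prec n β E k (inr h) (inr j)
  | T : ∀ {p q r : Fin n ⊕ β}, Prec n β E k p q → Prec n β E k q r → Prec n β E k p r
/-- A Stick order for `G = (A ∪ B, E)`: a linear (strict total) order on `A ∪ B` such that
every `A`-endpoint of an edge precedes its `B`-endpoint, and there is no forbidden
configuration `a' ≺ a ≺ b ≺ b'` with `a'b ∈ E`, `ab' ∈ E`, `ab ∉ E`. -/
def IsStickOrder (n : ℕ) (β : Type) (E : Fin n → β → Prop)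
    (r : (Fin n ⊕ β) → (Fin n ⊕ β) → Prop) : Prop :=
  IsStrictTotalOrder (Fin n ⊕ β) r ∧
  (∀ (a : Fin n) (b : β), E a b → r (inl a) (inr b)) ∧
  ¬ ∃ (a a' : Fin n) (b b' : β),
      r (inl a') (inl a) ∧ r (inl a) (inr b) ∧ r (inr b) (inr b') ∧
      E a' b ∧ E a b' ∧ ¬ E a b

/-- An A-Stick order: a Stick order whose restriction to `A` is the given order. -/
def IsAStickOrder (n : ℕ) (β : Type) (E : Fin n → β → Prop)
    (r : (Fin n ⊕ β) → (Fin n ⊕ β) → Prop) : Prop :=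
  IsStickOrder n β E r ∧ ∀ i j : Fin n, r (inl i) (inl j) ↔ i < j
/-- A canonical order for `G` (with `m j = max {i | a_i ≺° b_j}` given as a parameter):
a linear (strict total) order on `A ∪ B` extending `≺°` in which every `b_j` is
left-optimal, i.e. `a_{m_j} ≺ b_j` and `b_j ≺ a_{m_j + 1}` whenever `m_j < n`. -/
def IsCanonicalOrder (n : ℕ) (β : Type) (E : Fin n → β → Prop) (k : β → Fin n)
    (m : β → Fin n) (r : (Fin n ⊕ β) → (Fin n ⊕ β) → Prop) : Prop :=
  IsStrictTotalOrder (Fin n ⊕ β) r ∧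
  (∀ c d : Fin n ⊕ β, Prec n β E k c d → r c d) ∧
  ∀ j : β, r (inl (m j)) (inr j) ∧
    ∀ hlt : (m j : ℕ) + 1 < n, r (inr j) (inl ⟨(m j : ℕ) + 1, hlt⟩)

section Aux

variable {n : ℕ} {β : Type} {E : Fin n → β → Prop} {k : β → Fin n}

/-- If `c ≺° inl q` then `c = inl p` with `p < q`. -/
lemma prec_to_inl : ∀ {c d}, Prec n β E k c d → ∀ q : Fin n, d = inl q →
    ∃ p, c = inl p ∧ p < q := by
  intro c d h
  induction h with
  | O hij => intro q hq; injection hq with hq; exact ⟨_, rfl, hq ▸ hij⟩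
  | A _ => intro q hq; simp at hq
  | TB _ _ _ _ _ => intro q hq; simp at hq
  | FB _ _ _ _ => intro q hq; simp at hq
  | T h1 h2 ih1 ih2 =>
    intro q hq
    obtain ⟨p', rfl, hp'⟩ := ih2 q hq
    obtain ⟨p, rfl, hp⟩ := ih1 p' rfl
    exact ⟨p, rfl, hp.trans hp'⟩

lemma prec_inl_inl {p q : Fin n} (h : Prec n β E k (inl p) (inl q)) : p < q := by
  obtain ⟨p', hp', hlt⟩ := prec_to_inl h q rfl
  injection hp' with hp'; exact hp' ▸ hlt

lemma prec_not_inr_inl {w : β} {q : Fin n} (h : Prec n β E k (inr w) (inl q)) : False := by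
  obtain ⟨p', hp', _⟩ := prec_to_inl h q rfl
  simp at hp'

/-- Decomposition: if `inl p ≺° inr j` then some `t ≥ p` has an edge to some `w`
which is `j` itself or satisfies `inr w ≺° inr j`. -/
lemma prec_decomp : ∀ {c d}, Prec n β E k c d → ∀ (p : Fin n) (j : β),
    c = inl p → d = inr j →
    ∃ t w, p ≤ t ∧ E t w ∧ (w = j ∨ Prec n β E k (inr w) (inr j)) := by
  intro c d h
  induction h with
  | O _ => intro p j _ hd; simp at hd
  | A hE =>
    intro p j hc hd
    injection hc with hc; injection hd with hd
    subst hc; subst hd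
    exact ⟨_, _, le_refl _, hE, Or.inl rfl⟩
  | TB _ _ _ _ _ => intro p j hc _; simp at hc
  | FB _ _ _ _ => intro p j hc _; simp at hc
  | @T c x d h1 h2 ih1 ih2 =>
    intro p j hc hd
    subst hc; subst hd
    cases x with
    | inl q =>
      obtain ⟨t, w, hqt, htw, hw⟩ := ih2 q j rfl rfl
      exact ⟨t, w, (le_of_lt (prec_inl_inl h1)).trans hqt, htw, hw⟩
    | inr u =>
      obtain ⟨t, w, hpt, htw, hw⟩ := ih1 p u rfl rfl
      refine ⟨t, w, hpt, htw, Or.inr ?_⟩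
      rcases hw with rfl | hw
      · exact h2
      · exact Prec.T hw h2

/-- Key propagation lemma: if `inr w ≺° inr j`, `k j < i ≤ t`, `E i h` and `E t w`,
then `inr h ≺° inr j`. -/
lemma prec_push (hk : ∀ j : β, E (k j) j ∧ ∀ i : Fin n, E i j → i ≤ k j) :
    ∀ {c d}, Prec n β E k c d → ∀ (w j : β), c = inr w → d = inr j →
    ∀ (i : Fin n) (h : β) (t : Fin n), k j < i → E i h → i ≤ t → E t w →
    Prec n β E k (inr h) (inr j) := by
  intro c d hp
  induction hp with
  | O _ => intro w j hc _; simp at hc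
  | A _ => intro w j hc _; simp at hc
  | @TB s t0 h0 j0 hst0 ht0k hsj0 hnt0 ht0h0 =>
    intro w j hc hd
    injection hc with hc; injection hd with hd
    subst hc; subst hd
    intro i h t hki hih hit htw
    have hwj : Prec n β E k (inr h0) (inr j0) := Prec.TB hst0 ht0k hsj0 hnt0 ht0h0
    by_cases hiw : E i h0
    · exact Prec.FB hwj hki hiw hih
    · have hilt : i < t := lt_of_le_of_ne hit (by rintro rfl; exact hiw htw)
      have hikw : i < k h0 := lt_of_lt_of_le hilt ((hk h0).2 t htw)
      exact Prec.T (Prec.TB (lt_trans ht0k hki) hikw ht0h0 hiw hih) hwj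
  | @FB t0 w' h0 j0 hw'j0 hkt0 ht0w' ht0h0 ih =>
    intro w j hc hd
    injection hc with hc; injection hd with hd
    subst hc; subst hd
    intro i h t hki hih hit htw
    have hwj : Prec n β E k (inr h0) (inr j0) := Prec.FB hw'j0 hkt0 ht0w' ht0h0
    by_cases hiw : E i h0
    · exact Prec.FB hwj hki hiw hih
    · have hilt : i < t := lt_of_le_of_ne hit (by rintro rfl; exact hiw htw)
      have hikw : i < k h0 := lt_of_lt_of_le hilt ((hk h0).2 t htw)
      rcases le_or_gt i t0 with hit0 | ht0i
      · exact ih w' j0 rfl rfl i h t0 hki hih hit0 ht0w'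
      · exact Prec.T (Prec.TB ht0i hikw ht0h0 hiw hih) hwj
  | @T c x d h1 h2 ih1 ih2 =>
    intro w j hc hd
    subst hc; subst hd
    intro i h t hki hih hit htw
    cases x with
    | inl q => exact absurd h1 (fun h' => prec_not_inr_inl h')
    | inr u =>
      rcases le_or_gt i (k u) with hiku | hkui
      · exact ih2 u j rfl rfl i h (k u) hki hih hiku (hk u).1
      · exact Prec.T (ih1 w u rfl rfl i h t hkui hih hit htw) h2

end Aux

/-- If the relation `≺°` generated by (O),(A),(TB),(FB),(T) is irreflexive,
then every canonical order for `G` is an A-Stick order of `G`. -/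
theorem stmt8 (n : ℕ) (β : Type) [Fintype β] (E : Fin n → β → Prop) (k : β → Fin n)
    (hk : ∀ j : β, E (k j) j ∧ ∀ i : Fin n, E i j → i ≤ k j)
    (m : β → Fin n)
    (hm : ∀ j : β, Prec n β E k (inl (m j)) (inr j) ∧
      ∀ i : Fin n, Prec n β E k (inl i) (inr j) → i ≤ m j)
    (hirr : ∀ c : Fin n ⊕ β, ¬ Prec n β E k c c) :
    ∀ r, IsCanonicalOrder n β E k m r → IsAStickOrder n β E r := by
  intro r hr
  obtain ⟨hSTO, hext, hopt⟩ := hr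
  haveI := hSTO
  have hasym : ∀ {c d}, r c d → r d c → False := fun h1 h2 =>
    absurd (trans_of r h1 h2) (irrefl_of r _)
  have rlt : ∀ i j : Fin n, r (inl i) (inl j) → i < j := by
    intro i j hij
    rcases lt_trichotomy i j with h | h | h
    · exact h
    · subst h; exact absurd hij (irrefl_of r _)
    · exact absurd (hext _ _ (Prec.O h)) (fun h' => hasym hij h')
  refine ⟨⟨hSTO, fun a b hab => hext _ _ (Prec.A hab), ?_⟩,
    fun i j => ⟨rlt i j, fun h => hext _ _ (Prec.O h)⟩⟩
  rintro ⟨a, a', b, b', h1, h2, h3, hE1, hE2, hE3⟩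
  have haa : a' < a := rlt _ _ h1
  rcases lt_trichotomy a (k b) with hak | hak | hak
  · exact hasym h3 (hext _ _ (Prec.TB haa hak hE1 hE3 hE2))
  · exact hE3 (hak ▸ (hk b).1)
  · -- k b < a
    have ham : a ≤ m b := by
      by_contra hcon
      push_neg at hcon
      have hlt : (m b : ℕ) + 1 < n := lt_of_le_of_lt hcon a.isLt
      have hb1 := (hopt b).2 hlt
      have hle : ((m b : ℕ) + 1 : ℕ) ≤ (a : ℕ) := hcon
      rcases eq_or_lt_of_le hle with he | hl
      · have : (⟨(m b : ℕ) + 1, hlt⟩ : Fin n) = a := Fin.ext he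
        exact hasym h2 (this ▸ hb1)
      · exact hasym h2 (trans_of r hb1 (hext _ _ (Prec.O hl)))
    have hPab : Prec n β E k (inl a) (inr b) := by
      rcases eq_or_lt_of_le ham with he | hl
      · exact he ▸ (hm b).1
      · exact Prec.T (Prec.O hl) (hm b).1
    obtain ⟨t, w, hat, htw, hwj⟩ := prec_decomp hPab a b rfl rfl
    rcases hwj with rfl | hw
    · exact absurd ((hk w).2 t htw) (not_le_of_gt (lt_of_lt_of_le hak hat))
    · exact hasym h3 (hext _ _ (prec_push hk hw w b rfl rfl a b' t hak hE2 hat htw))
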